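/- (Periodicity of the Floquet eigenvectors.) If x₀ is T-periodic and b(T) ≠ 1, then α(t + T) = α(t) · e^{μ₂ T} and β(t + T) = β(t) · e^{μ₂ T} for all t; consequently both u₁(t) := f(x₀(t)) and u₂(t) := e^{−μ₂ t}(α(t) f(x₀(t)) + β(t) f⊥(x₀(t))) are T-periodic functions of t. -/

import Mathlib

open Matrix

noncomputable section

/-- The perpendicular vector field on ℝ²: `(v₁, v₂) ↦ (v₂, −v₁)`. -/
def perp (v : Fin 2 → ℝ) : Fin 2 → ℝ := ![v 1, -v 0]

/-- The Jacobian matrix of `f : ℝ² → ℝ²` at a point `x`: entry `(i, j)` is `∂fᵢ/∂xⱼ (x)`. -/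
def jac (f : (Fin 2 → ℝ) → (Fin 2 → ℝ)) (x : Fin 2 → ℝ) : Matrix (Fin 2) (Fin 2) ℝ :=
  Matrix.of fun i j => fderiv ℝ f x (Pi.single j 1) i

/-- The divergence of `f : ℝ² → ℝ²`, i.e. the trace of its Jacobian. -/
def divg (f : (Fin 2 → ℝ) → (Fin 2 → ℝ)) (x : Fin 2 → ℝ) : ℝ := (jac f x).trace

/-- Diliberto's function `b(t) = exp(∫₀ᵗ (div f)(x₀ s) ds)`. -/
def bD (f : (Fin 2 → ℝ) → (Fin 2 → ℝ)) (x₀ : ℝ → (Fin 2 → ℝ)) (t : ℝ) : ℝ :=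
  Real.exp (∫ s in (0:ℝ)..t, divg f (x₀ s))

/-- Diliberto's function
`a(t) = ∫₀ᵗ [f(x₀ s)ᵀ (A s + (A s)ᵀ) f⊥(x₀ s) / ‖f(x₀ s)‖⁴] b(s) ds`
(here `‖v‖² = v ⬝ᵥ v` is the square of the euclidean norm). -/
def aD (f : (Fin 2 → ℝ) → (Fin 2 → ℝ)) (x₀ : ℝ → (Fin 2 → ℝ)) (t : ℝ) : ℝ :=
  ∫ s in (0:ℝ)..t,
    (f (x₀ s) ⬝ᵥ ((jac f (x₀ s) + (jac f (x₀ s))ᵀ).mulVec (perp (f (x₀ s)))) /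
      (f (x₀ s) ⬝ᵥ f (x₀ s)) ^ 2) * bD f x₀ s

/-- The second Floquet exponent `μ₂ = (1/T) ∫₀ᵀ (div f)(x₀ s) ds`. -/
def mu2D (f : (Fin 2 → ℝ) → (Fin 2 → ℝ)) (x₀ : ℝ → (Fin 2 → ℝ)) (T : ℝ) : ℝ :=
  (1 / T) * ∫ s in (0:ℝ)..T, divg f (x₀ s)

/-- `α(t) = a(T)/(b(T) − 1) + a(t)`. -/
def alphaD (f : (Fin 2 → ℝ) → (Fin 2 → ℝ)) (x₀ : ℝ → (Fin 2 → ℝ)) (T t : ℝ) : ℝ :=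
  aD f x₀ T / (bD f x₀ T - 1) + aD f x₀ t

/-- `β(t) = b(t)/‖f(x₀ t)‖²` (with `‖v‖² = v ⬝ᵥ v`). -/
def betaD (f : (Fin 2 → ℝ) → (Fin 2 → ℝ)) (x₀ : ℝ → (Fin 2 → ℝ)) (t : ℝ) : ℝ :=
  bD f x₀ t / (f (x₀ t) ⬝ᵥ f (x₀ t))

/-- First Floquet eigenvector `u₁(t) = f(x₀ t)`. -/
def u1D (f : (Fin 2 → ℝ) → (Fin 2 → ℝ)) (x₀ : ℝ → (Fin 2 → ℝ)) (t : ℝ) : Fin 2 → ℝ :=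
  f (x₀ t)

/-- Second Floquet eigenvector `u₂(t) = e^{−μ₂ t} (α(t) f(x₀ t) + β(t) f⊥(x₀ t))`. -/
def u2D (f : (Fin 2 → ℝ) → (Fin 2 → ℝ)) (x₀ : ℝ → (Fin 2 → ℝ)) (T t : ℝ) : Fin 2 → ℝ :=
  Real.exp (-(mu2D f x₀ T) * t) •
    (alphaD f x₀ T t • f (x₀ t) + betaD f x₀ t • perp (f (x₀ t)))

/-- First covector `v₁(t) = (1/b(t)) (−α(t) f⊥(x₀ t) + β(t) f(x₀ t))`. -/
def v1D (f : (Fin 2 → ℝ) → (Fin 2 → ℝ)) (x₀ : ℝ → (Fin 2 → ℝ)) (T t : ℝ) : Fin 2 → ℝ :=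
  (1 / bD f x₀ t) •
    ((-(alphaD f x₀ T t)) • perp (f (x₀ t)) + betaD f x₀ t • f (x₀ t))

/-- Second covector `v₂(t) = (e^{μ₂ t}/b(t)) f⊥(x₀ t)`. -/
def v2D (f : (Fin 2 → ℝ) → (Fin 2 → ℝ)) (x₀ : ℝ → (Fin 2 → ℝ)) (T t : ℝ) : Fin 2 → ℝ :=
  (Real.exp (mu2D f x₀ T * t) / bD f x₀ t) • perp (f (x₀ t))

section cont
variable {f : (Fin 2 → ℝ) → (Fin 2 → ℝ)} {x₀ : ℝ → (Fin 2 → ℝ)}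

lemma cont_x₀ (hx : ∀ t, HasDerivAt x₀ (f (x₀ t)) t) : Continuous x₀ :=
  Differentiable.continuous (fun t => (hx t).differentiableAt)

lemma cont_jac_entry (hf : ContDiff ℝ 1 f) (hx : ∀ t, HasDerivAt x₀ (f (x₀ t)) t) (i j : Fin 2) : Continuous fun s => jac f (x₀ s) i j := by
  have h1 : Continuous fun s => fderiv ℝ f (x₀ s) :=
    (hf.continuous_fderiv one_ne_zero).comp (cont_x₀ hx)
  have h2 : Continuous fun s => fderiv ℝ f (x₀ s) (Pi.single j 1) :=
    h1.clm_apply continuous_const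
  exact (continuous_apply i).comp h2

lemma cont_g (hf : ContDiff ℝ 1 f) (hx : ∀ t, HasDerivAt x₀ (f (x₀ t)) t) : Continuous fun s => divg f (x₀ s) := by
  simp only [divg, Matrix.trace, Matrix.diag, Fin.sum_univ_two]
  exact (cont_jac_entry hf hx 0 0).add (cont_jac_entry hf hx 1 1)

lemma cont_bD (hf : ContDiff ℝ 1 f) (hx : ∀ t, HasDerivAt x₀ (f (x₀ t)) t) : Continuous (bD f x₀) := by
  apply Real.continuous_exp.comp
  exact intervalIntegral.continuous_primitive
    (fun a b => (cont_g hf hx).intervalIntegrable a b) 0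

lemma cont_c (hf : ContDiff ℝ 1 f) (hx : ∀ t, HasDerivAt x₀ (f (x₀ t)) t) (hfne : ∀ t, f (x₀ t) ≠ 0) :
    Continuous fun s =>
      (f (x₀ s) ⬝ᵥ ((jac f (x₀ s) + (jac f (x₀ s))ᵀ).mulVec (perp (f (x₀ s)))) /
        (f (x₀ s) ⬝ᵥ f (x₀ s)) ^ 2) * bD f x₀ s := by
  have hF : Continuous fun s => f (x₀ s) := hf.continuous.comp (cont_x₀ hx)
  have hFi : ∀ i, Continuous fun s => f (x₀ s) i := fun i => (continuous_apply i).comp hF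
  have hJ := cont_jac_entry hf hx
  have hdot : Continuous fun s => f (x₀ s) ⬝ᵥ f (x₀ s) := by
    simp only [dotProduct, Fin.sum_univ_two]
    exact ((hFi 0).mul (hFi 0)).add ((hFi 1).mul (hFi 1))
  have hM : ∀ i j, Continuous fun s => (jac f (x₀ s) + (jac f (x₀ s))ᵀ) i j := by
    intro i j
    simp only [Matrix.add_apply, Matrix.transpose_apply]
    exact (hJ i j).add (hJ j i)
  have hp : ∀ i, Continuous fun s => perp (f (x₀ s)) i := by
    intro i
    fin_cases i
    · simpa [perp] using hFi 1
    · simp [perp]; exact (hFi 0).neg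
  have hmv : ∀ i, Continuous fun s =>
      ((jac f (x₀ s) + (jac f (x₀ s))ᵀ).mulVec (perp (f (x₀ s)))) i := by
    intro i
    simp only [mulVec, dotProduct, Fin.sum_univ_two]
    exact ((hM i 0).mul (hp 0)).add ((hM i 1).mul (hp 1))
  have hnum : Continuous fun s =>
      f (x₀ s) ⬝ᵥ ((jac f (x₀ s) + (jac f (x₀ s))ᵀ).mulVec (perp (f (x₀ s)))) := by
    simp only [dotProduct, Fin.sum_univ_two]
    exact ((hFi 0).mul (hmv 0)).add ((hFi 1).mul (hmv 1))
  have hden : Continuous fun s => ((f (x₀ s) ⬝ᵥ f (x₀ s)) ^ 2 : ℝ) := hdot.pow 2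
  have hdenne : ∀ s, ((f (x₀ s) ⬝ᵥ f (x₀ s)) ^ 2 : ℝ) ≠ 0 := by
    intro s
    have : (0:ℝ) < f (x₀ s) ⬝ᵥ f (x₀ s) := by
      have hv := hfne s
      have : f (x₀ s) ⬝ᵥ f (x₀ s) = f (x₀ s) 0 * f (x₀ s) 0 + f (x₀ s) 1 * f (x₀ s) 1 := by
        simp [dotProduct, Fin.sum_univ_two]
      rw [this]
      rcases (by
        by_contra h
        push_neg at h
        exact hv (funext fun i => by fin_cases i <;> simp [h.1, h.2]) :
          f (x₀ s) 0 ≠ 0 ∨ f (x₀ s) 1 ≠ 0) with h | h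
      · nlinarith [sq_nonneg (f (x₀ s) 1), sq_abs (f (x₀ s) 0), abs_pos.mpr h]
      · nlinarith [sq_nonneg (f (x₀ s) 0), sq_abs (f (x₀ s) 1), abs_pos.mpr h]
    positivity
  exact ((hnum.div hden hdenne)).mul (cont_bD hf hx)
end cont

lemma shift_int (C : ℝ → ℝ) (hC : Continuous C) (T k : ℝ)
    (hs : ∀ s, C (s + T) = k * C s) (t : ℝ) :
    ∫ s in (0:ℝ)..(t + T), C s = (∫ s in (0:ℝ)..T, C s) + k * ∫ s in (0:ℝ)..t, C s := by
  rw [← intervalIntegral.integral_add_adjacent_intervals (a := 0) (b := T) (c := t + T)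
    (hC.intervalIntegrable _ _) (hC.intervalIntegrable _ _)]
  congr 1
  rw [← intervalIntegral.integral_const_mul,
    show (∫ s in (0:ℝ)..t, k * C s) = ∫ s in (0:ℝ)..t, C (s + T) by simp [hs],
    intervalIntegral.integral_comp_add_right, zero_add]

theorem floquet_eigenvectors_periodic_aux
    (f : (Fin 2 → ℝ) → (Fin 2 → ℝ)) (x₀ : ℝ → (Fin 2 → ℝ)) (T : ℝ)
    (hf : ContDiff ℝ 1 f)
    (hx : ∀ t, HasDerivAt x₀ (f (x₀ t)) t)
    (hfne : ∀ t, f (x₀ t) ≠ 0)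
    (hT : 0 < T)
    (hper : ∀ t, x₀ (t + T) = x₀ t)
    (hbT : bD f x₀ T ≠ 1) :
    (∀ t, alphaD f x₀ T (t + T) = alphaD f x₀ T t * Real.exp (mu2D f x₀ T * T)) ∧
    (∀ t, betaD f x₀ (t + T) = betaD f x₀ t * Real.exp (mu2D f x₀ T * T)) ∧
    (∀ t, u1D f x₀ (t + T) = u1D f x₀ t) ∧
    (∀ t, u2D f x₀ T (t + T) = u2D f x₀ T t) := by
  have hg : Continuous fun s => divg f (x₀ s) := cont_g hf hx
  have hb : ∀ t, bD f x₀ (t + T) = bD f x₀ T * bD f x₀ t := by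
    intro t
    unfold bD
    rw [shift_int _ hg T 1 (fun s => by rw [hper, one_mul]) t, one_mul, Real.exp_add]
  have hexpT : Real.exp (mu2D f x₀ T * T) = bD f x₀ T := by
    unfold mu2D bD
    congr 1
    field_simp
  have hc := cont_c hf hx hfne
  have ha : ∀ t, aD f x₀ (t + T) = aD f x₀ T + bD f x₀ T * aD f x₀ t := by
    intro t
    unfold aD
    exact shift_int _ hc T (bD f x₀ T)
      (fun s => by rw [hper, hb]; ring) t
  have halpha : ∀ t, alphaD f x₀ T (t + T) = alphaD f x₀ T t * bD f x₀ T := by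
    intro t
    unfold alphaD
    rw [ha]
    have h1 : bD f x₀ T - 1 ≠ 0 := sub_ne_zero.mpr hbT
    field_simp
    ring
  have hbeta : ∀ t, betaD f x₀ (t + T) = betaD f x₀ t * bD f x₀ T := by
    intro t
    unfold betaD
    rw [hper, hb]
    ring
  refine ⟨fun t => by rw [halpha, hexpT], fun t => by rw [hbeta, hexpT], fun t => by
    unfold u1D; rw [hper], fun t => ?_⟩
  unfold u2D
  rw [hper, halpha, hbeta]
  funext i
  have key : Real.exp (-(mu2D f x₀ T) * (t + T)) * bD f x₀ T
      = Real.exp (-(mu2D f x₀ T) * t) := by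
    rw [← hexpT, ← Real.exp_add]; ring_nf
  simp only [Pi.smul_apply, Pi.add_apply, smul_eq_mul]
  linear_combination (alphaD f x₀ T t * f (x₀ t) i + betaD f x₀ t * perp (f (x₀ t)) i) * key

/-- **periodicity of the Floquet eigenvectors.** If `x₀` is `T`-periodic
and `b(T) ≠ 1`, then `α(t+T) = α(t) e^{μ₂ T}`, `β(t+T) = β(t) e^{μ₂ T}`, and both
`u₁` and `u₂` are `T`-periodic. -/
theorem floquet_eigenvectors_periodic
    (f : (Fin 2 → ℝ) → (Fin 2 → ℝ)) (x₀ : ℝ → (Fin 2 → ℝ)) (T : ℝ)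
    (hf : ContDiff ℝ 1 f)
    (hx : ∀ t, HasDerivAt x₀ (f (x₀ t)) t)
    (hfne : ∀ t, f (x₀ t) ≠ 0)
    (hT : 0 < T)
    (hper : ∀ t, x₀ (t + T) = x₀ t)
    (hbT : bD f x₀ T ≠ 1) :
    (∀ t, alphaD f x₀ T (t + T) = alphaD f x₀ T t * Real.exp (mu2D f x₀ T * T)) ∧
    (∀ t, betaD f x₀ (t + T) = betaD f x₀ t * Real.exp (mu2D f x₀ T * T)) ∧
    (∀ t, u1D f x₀ (t + T) = u1D f x₀ t) ∧
    (∀ t, u2D f x₀ T (t + T) = u2D f x₀ T t) := by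
  exact floquet_eigenvectors_periodic_aux f x₀ T hf hx hfne hT hper hbT

end
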